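/- The image under T of the set of n×n EDMs equals { B ∈ S^n : B ⪰ 0, Be = 0 }, where T(D) = -½ J D J and J = I - ee^T/n. -/

import Mathlib

open Matrix BigOperators


section aux
variable {n : ℕ}

lemma myMul_vecMulVec (A : Matrix (Fin n) (Fin n) ℝ) (u v : Fin n → ℝ) :
    A * vecMulVec u v = vecMulVec (A *ᵥ u) v := by
  ext i j
  simp [Matrix.mul_apply, vecMulVec_apply, Matrix.mulVec, dotProduct, Finset.sum_mul, mul_assoc]

lemma myVecMulVec_mul (A : Matrix (Fin n) (Fin n) ℝ) (u v : Fin n → ℝ) :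
    vecMulVec u v * A = vecMulVec u (v ᵥ* A) := by
  ext i j
  simp [Matrix.mul_apply, vecMulVec_apply, Matrix.vecMul, dotProduct, Finset.mul_sum, mul_assoc]

lemma myVecMulVec_zero (u : Fin n → ℝ) : vecMulVec u (0 : Fin n → ℝ) = 0 := by
  ext i j; simp [vecMulVec_apply]

lemma myZero_vecMulVec (v : Fin n → ℝ) : vecMulVec (0 : Fin n → ℝ) v = 0 := by
  ext i j; simp [vecMulVec_apply]

lemma Tcalc (J : Matrix (Fin n) (Fin n) ℝ)
    (hJe : J *ᵥ (fun _ => (1:ℝ)) = 0) (heJ : (fun _ => (1:ℝ)) ᵥ* J = 0)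
    (G : Matrix (Fin n) (Fin n) ℝ) (c : Fin n → ℝ) :
    (-(1/2) : ℝ) • (J * (Matrix.of fun i j => c i + c j - 2 * G i j) * J) = J * G * J := by
  have hD : (Matrix.of fun i j => c i + c j - 2 * G i j) =
      vecMulVec c (fun _ => 1) + vecMulVec (fun _ => 1) c - (2:ℝ) • G := by
    ext i j
    simp [vecMulVec_apply]
    try ring
  rw [hD]
  simp only [Matrix.mul_sub, Matrix.mul_add, Matrix.sub_mul, Matrix.add_mul,
    myMul_vecMulVec, myVecMulVec_mul, hJe, heJ,
    myVecMulVec_zero, myZero_vecMulVec, Matrix.mul_smul, Matrix.smul_mul,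
    Matrix.zero_mul, add_zero, zero_add, zero_sub, smul_neg, smul_smul, neg_neg]
  norm_num

lemma distsq {k : ℕ} (p q : EuclideanSpace ℝ (Fin k)) :
    dist p q ^ 2 = (∑ a, p a * p a) + (∑ a, q a * q a) - 2 * ∑ a, p a * q a := by
  rw [EuclideanSpace.dist_eq, Real.sq_sqrt (by positivity)]
  simp only [Real.dist_eq, sq_abs]
  rw [Finset.sum_congr rfl (fun a _ => by ring :
    ∀ a ∈ Finset.univ, (p a - q a) ^ 2 = (p a * p a + q a * q a) - 2 * (p a * q a))]
  rw [Finset.sum_sub_distrib, Finset.sum_add_distrib, Finset.mul_sum]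

end aux


/-- `D` is a Euclidean distance matrix. -/
def IsEDM {n : ℕ} (D : Matrix (Fin n) (Fin n) ℝ) : Prop :=
  ∃ (k : ℕ) (p : Fin n → EuclideanSpace ℝ (Fin k)),
    ∀ i j, D i j = dist (p i) (p j) ^ 2

/-- The image under `T : D ↦ -½ J D J` of the set of `n × n` EDMs equals
`{ B : B ⪰ 0, Be = 0 }`, with `J = I - eeᵀ/n`. -/
theorem stmt2 (n : ℕ) (hn : 0 < n)
    (J : Matrix (Fin n) (Fin n) ℝ)
    (hJ : J = 1 - (n : ℝ)⁻¹ • Matrix.of (fun _ _ => (1 : ℝ))) :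
    (fun D : Matrix (Fin n) (Fin n) ℝ => (-(1/2) : ℝ) • (J * D * J)) ''
        {D | IsEDM D} =
      {B : Matrix (Fin n) (Fin n) ℝ | B.PosSemidef ∧ B *ᵥ (fun _ => (1 : ℝ)) = 0} := by
  have hne : (n : ℝ) ≠ 0 := Nat.cast_ne_zero.mpr hn.ne'
  have hJe : J *ᵥ (fun _ => (1:ℝ)) = 0 := by
    funext i
    simp [hJ, Matrix.mulVec, dotProduct, Matrix.sub_apply, Matrix.one_apply,
      Finset.sum_sub_distrib, Finset.sum_ite_eq, hne]
  have heJ : (fun _ => (1:ℝ)) ᵥ* J = 0 := by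
    funext j
    simp [hJ, Matrix.vecMul, dotProduct, Matrix.sub_apply, Matrix.one_apply,
      Finset.sum_sub_distrib, Finset.sum_ite_eq, hne]
  have hJH : Jᴴ = J := by
    rw [hJ]; ext i j
    simp [Matrix.conjTranspose_apply, Matrix.one_apply, eq_comm]
  ext B
  simp only [Set.mem_image, Set.mem_setOf_eq]
  constructor
  · rintro ⟨D, ⟨k, p, hp⟩, rfl⟩
    set X : Matrix (Fin k) (Fin n) ℝ := Matrix.of fun a i => p i a with hX
    have hGij : ∀ i j, (Xᴴ * X) i j = ∑ a, p i a * p j a := by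
      intro i j
      simp [Matrix.mul_apply, Matrix.conjTranspose_apply, hX]
    have hD : D = Matrix.of fun i j =>
        (fun i => (Xᴴ * X) i i) i + (fun i => (Xᴴ * X) i i) j - 2 * (Xᴴ * X) i j := by
      ext i j
      rw [hp i j, distsq]
      simp [Matrix.mul_apply, Matrix.transpose_apply, Matrix.conjTranspose_apply, hX]
    have hT : (-(1/2) : ℝ) • (J * D * J) = J * (Xᴴ * X) * J := by
      rw [hD]; exact Tcalc J hJe heJ _ _
    rw [hT]
    constructor
    · have : J * (Xᴴ * X) * J = (X * J)ᴴ * (X * J) := by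
        rw [Matrix.conjTranspose_mul, hJH]
        simp only [Matrix.mul_assoc]
      rw [this]
      exact Matrix.posSemidef_conjTranspose_mul_self (X * J)
    · rw [← Matrix.mulVec_mulVec, hJe, Matrix.mulVec_zero]
  · rintro ⟨hB, hBe⟩
    have hsymm : ∀ i j, B i j = B j i := by
      intro i j
      conv_rhs => rw [← hB.1]
      simp [Matrix.conjTranspose_apply]
    have hrow : ∀ i, ∑ k, B i k = 0 := by
      intro i
      have := congrFun hBe i
      simpa [Matrix.mulVec, dotProduct] using this
    have hcol : ∀ j, ∑ k, B k j = 0 := by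
      intro j
      rw [Finset.sum_congr rfl fun k _ => hsymm k j]
      exact hrow j
    have hJB : J * B = B := by
      ext i j
      rw [hJ]
      simp [Matrix.sub_mul, Matrix.smul_mul, Matrix.sub_apply, Matrix.smul_apply,
        Matrix.mul_apply, sub_mul, Finset.sum_sub_distrib, Matrix.one_apply,
        ← Finset.mul_sum, hcol j]
    have hBJ : B * J = B := by
      ext i j
      rw [hJ]
      simp [Matrix.mul_sub, Matrix.mul_smul, Matrix.sub_apply, Matrix.smul_apply,
        Matrix.mul_apply, mul_sub, Finset.sum_sub_distrib, Matrix.one_apply,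
        ← Finset.sum_mul, hrow i]
    obtain ⟨A, hA⟩ : ∃ A : Matrix (Fin n) (Fin n) ℝ, B = Aᴴ * A := by
      open scoped MatrixOrder in
      classical
      obtain ⟨X, hX, -, hXB⟩ :=
        CFC.exists_sqrt_of_isSelfAdjoint_of_quasispectrumRestricts hB.isHermitian
          (QuasispectrumRestricts.nnreal_of_nonneg hB.nonneg)
      refine ⟨X, ?_⟩
      rw [← hXB, ← Matrix.star_eq_conjTranspose, hX.star_eq]
    have hBij : ∀ i j, B i j = ∑ a, A a i * A a j := by
      intro i j
      rw [hA]
      simp [Matrix.mul_apply, Matrix.conjTranspose_apply]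
    refine ⟨Matrix.of fun i j => B i i + B j j - 2 * B i j, ⟨n,
      fun i => (WithLp.toLp 2 (fun a => A a i) : EuclideanSpace ℝ (Fin n)), ?_⟩, ?_⟩
    · intro i j
      rw [distsq]
      simp [hBij]
    · rw [Tcalc J hJe heJ B (fun i => B i i), hJB, hBJ]
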